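/- arXiv:2009.08642 — 2 statements merged into one kernel-verified Lean document; each statement's English description precedes it below -/
import Mathlib

section
/- In the exterior algebra over ℝ⁶ with basis e¹,…,e⁶, let Ω = c₁ e¹∧e² + c₂ e³∧e⁴ + c₃ e⁵∧e⁶ + c₄ e³∧e⁶ + c₅ e⁴∧e⁵. The linear map from span{e¹∧e², e³∧e⁴, e⁵∧e⁶, e³∧e⁶, e⁴∧e⁵} to 4-forms given by wedging with Ω is injective if and only if c₁(c₂c₃ + c₄c₅) ≠ 0. -/
open ExteriorAlgebra

/-- The basis 1-forms `e i` (e¹ = e 0, …, e⁶ = e 5) of the exterior algebra over ℝ⁶. -/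
noncomputable def e (i : Fin 6) : ExteriorAlgebra ℝ (Fin 6 → ℝ) :=
  ExteriorAlgebra.ι ℝ (Pi.single i 1)

namespace Stmt6Aux

lemma e_sq (i : Fin 6) : e i * e i = 0 := ι_sq_zero _

lemma e_swap (i j : Fin 6) : e i * e j = -(e j * e i) :=
  eq_neg_of_add_eq_zero_left (ι_add_mul_swap _ _)

lemma e_swap' (i j : Fin 6) (x : ExteriorAlgebra ℝ (Fin 6 → ℝ)) :
    e i * (e j * x) = -(e j * (e i * x)) := by
  rw [← mul_assoc, e_swap, neg_mul, mul_assoc]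

lemma e_sq' (i : Fin 6) (x : ExteriorAlgebra ℝ (Fin 6 → ℝ)) :
    e i * (e i * x) = 0 := by rw [← mul_assoc, e_sq, zero_mul]

noncomputable def fam4 (S : Fin 4 → Fin 6) : ∀ i : ℕ, (Fin 6 → ℝ) [⋀^Fin i]→ₗ[ℝ] ℝ
  | 4 => Matrix.detRowAlternating.compLinearMap (LinearMap.funLeft ℝ ℝ S)
  | _ => 0

noncomputable def φ (S : Fin 4 → Fin 6) : ExteriorAlgebra ℝ (Fin 6 → ℝ) →ₗ[ℝ] ℝ :=
  liftAlternating (fam4 S)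

noncomputable def fam2 (S : Fin 2 → Fin 6) : ∀ i : ℕ, (Fin 6 → ℝ) [⋀^Fin i]→ₗ[ℝ] ℝ
  | 2 => Matrix.detRowAlternating.compLinearMap (LinearMap.funLeft ℝ ℝ S)
  | _ => 0

noncomputable def ψ (S : Fin 2 → Fin 6) : ExteriorAlgebra ℝ (Fin 6 → ℝ) →ₗ[ℝ] ℝ :=
  liftAlternating (fam2 S)

lemma quad_eq (p q r s : Fin 6) :
    e p * (e q * (e r * e s)) =
      ιMulti ℝ 4 ![Pi.single p 1, Pi.single q 1, Pi.single r 1, Pi.single s 1] := by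
  rw [ιMulti_apply]
  simp [e, List.ofFn_succ, mul_assoc]

lemma pair_eq (p q : Fin 6) :
    e p * e q = ιMulti ℝ 2 ![Pi.single p 1, Pi.single q 1] := by
  rw [ιMulti_apply]
  simp [e, List.ofFn_succ]

lemma phi_val (S : Fin 4 → Fin 6) (p q r s : Fin 6) :
    φ S (e p * (e q * (e r * e s))) =
      Matrix.det (Matrix.of fun k l =>
        (![Pi.single p 1, Pi.single q 1, Pi.single r 1, Pi.single s 1] : Fin 4 → Fin 6 → ℝ)
          k (S l)) := by
  rw [quad_eq, φ, liftAlternating_apply_ιMulti]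
  rfl

lemma psi_val (S : Fin 2 → Fin 6) (p q : Fin 6) :
    ψ S (e p * e q) =
      Matrix.det (Matrix.of fun k l =>
        (![Pi.single p 1, Pi.single q 1] : Fin 2 → Fin 6 → ℝ) k (S l)) := by
  rw [pair_eq, ψ, liftAlternating_apply_ιMulti]
  rfl

lemma expand (c₁ c₂ c₃ c₄ c₅ t₁ t₂ t₃ t₄ t₅ : ℝ) :
    (c₁ • (e 0 * e 1) + c₂ • (e 2 * e 3) + c₃ • (e 4 * e 5)
        + c₄ • (e 2 * e 5) + c₅ • (e 3 * e 4)) *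
      (t₁ • (e 0 * e 1) + t₂ • (e 2 * e 3) + t₃ • (e 4 * e 5)
        + t₄ • (e 2 * e 5) + t₅ • (e 3 * e 4)) =
    (c₁*t₂+c₂*t₁) • (e 0 * (e 1 * (e 2 * e 3)))
    + (c₁*t₃+c₃*t₁) • (e 0 * (e 1 * (e 4 * e 5)))
    + (c₁*t₄+c₄*t₁) • (e 0 * (e 1 * (e 2 * e 5)))
    + (c₁*t₅+c₅*t₁) • (e 0 * (e 1 * (e 3 * e 4)))
    + (c₂*t₃+c₃*t₂+c₄*t₅+c₅*t₄) • (e 2 * (e 3 * (e 4 * e 5))) := by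
  simp only [mul_add, add_mul, smul_mul_assoc, mul_smul_comm, mul_assoc,
    e_swap' 1 0, e_swap' 2 0, e_swap' 2 1, e_swap' 3 0, e_swap' 3 1, e_swap' 3 2,
    e_swap' 4 0, e_swap' 4 1, e_swap' 4 2, e_swap' 4 3,
    e_swap' 5 0, e_swap' 5 1, e_swap' 5 2, e_swap' 5 3, e_swap' 5 4,
    e_swap 1 0, e_swap 2 0, e_swap 2 1, e_swap 3 0, e_swap 3 1, e_swap 3 2,
    e_swap 4 0, e_swap 4 1, e_swap 4 2, e_swap 4 3,
    e_swap 5 0, e_swap 5 1, e_swap 5 2, e_swap 5 3, e_swap 5 4,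
    e_sq, e_sq', mul_neg, neg_neg, mul_zero, smul_neg, smul_zero, neg_zero]
  module

lemma mem_comb (t₁ t₂ t₃ t₄ t₅ : ℝ) :
    t₁ • (e 0 * e 1) + t₂ • (e 2 * e 3) + t₃ • (e 4 * e 5)
        + t₄ • (e 2 * e 5) + t₅ • (e 3 * e 4) ∈
      Submodule.span ℝ
        ({e 0 * e 1, e 2 * e 3, e 4 * e 5, e 2 * e 5, e 3 * e 4} :
          Set (ExteriorAlgebra ℝ (Fin 6 → ℝ))) := by
  refine add_mem (add_mem (add_mem (add_mem ?_ ?_) ?_) ?_) ?_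
  · exact Submodule.smul_mem _ _ (Submodule.subset_span (Set.mem_insert _ _))
  · exact Submodule.smul_mem _ _ (Submodule.subset_span
      (Set.mem_insert_of_mem _ (Set.mem_insert _ _)))
  · exact Submodule.smul_mem _ _ (Submodule.subset_span
      (Set.mem_insert_of_mem _ (Set.mem_insert_of_mem _ (Set.mem_insert _ _))))
  · exact Submodule.smul_mem _ _ (Submodule.subset_span
      (Set.mem_insert_of_mem _ (Set.mem_insert_of_mem _ (Set.mem_insert_of_mem _
        (Set.mem_insert _ _)))))
  · exact Submodule.smul_mem _ _ (Submodule.subset_span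
      (Set.mem_insert_of_mem _ (Set.mem_insert_of_mem _ (Set.mem_insert_of_mem _
        (Set.mem_insert_of_mem _ rfl)))))

lemma rep {z : ExteriorAlgebra ℝ (Fin 6 → ℝ)}
    (hz : z ∈ Submodule.span ℝ
        ({e 0 * e 1, e 2 * e 3, e 4 * e 5, e 2 * e 5, e 3 * e 4} :
          Set (ExteriorAlgebra ℝ (Fin 6 → ℝ)))) :
    ∃ t₁ t₂ t₃ t₄ t₅ : ℝ,
      z = t₁ • (e 0 * e 1) + t₂ • (e 2 * e 3) + t₃ • (e 4 * e 5)
        + t₄ • (e 2 * e 5) + t₅ • (e 3 * e 4) := by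
  induction hz using Submodule.span_induction with
  | mem x h =>
    simp only [Set.mem_insert_iff, Set.mem_singleton_iff] at h
    rcases h with h | h | h | h | h
    · exact ⟨1, 0, 0, 0, 0, by simp [h]⟩
    · exact ⟨0, 1, 0, 0, 0, by simp [h]⟩
    · exact ⟨0, 0, 1, 0, 0, by simp [h]⟩
    · exact ⟨0, 0, 0, 1, 0, by simp [h]⟩
    · exact ⟨0, 0, 0, 0, 1, by simp [h]⟩
  | zero => exact ⟨0, 0, 0, 0, 0, by simp⟩
  | add x y _ _ ihx ihy =>
    obtain ⟨a₁, a₂, a₃, a₄, a₅, ha⟩ := ihx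
    obtain ⟨b₁, b₂, b₃, b₄, b₅, hb⟩ := ihy
    exact ⟨a₁ + b₁, a₂ + b₂, a₃ + b₃, a₄ + b₄, a₅ + b₅, by rw [ha, hb]; module⟩
  | smul r x _ ih =>
    obtain ⟨a₁, a₂, a₃, a₄, a₅, ha⟩ := ih
    exact ⟨r * a₁, r * a₂, r * a₃, r * a₄, r * a₅, by rw [ha]; module⟩

lemma psiv00 : ψ ![0, 1] (e 0 * e 1) = 1 := by
  rw [psi_val]; simp +decide [Matrix.det_fin_two, Pi.single_apply]

lemma psiv01 : ψ ![0, 1] (e 2 * e 3) = 0 := by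
  rw [psi_val]; simp +decide [Matrix.det_fin_two, Pi.single_apply]

lemma psiv02 : ψ ![0, 1] (e 4 * e 5) = 0 := by
  rw [psi_val]; simp +decide [Matrix.det_fin_two, Pi.single_apply]

lemma psiv03 : ψ ![0, 1] (e 2 * e 5) = 0 := by
  rw [psi_val]; simp +decide [Matrix.det_fin_two, Pi.single_apply]

lemma psiv04 : ψ ![0, 1] (e 3 * e 4) = 0 := by
  rw [psi_val]; simp +decide [Matrix.det_fin_two, Pi.single_apply]

lemma psiv10 : ψ ![2, 3] (e 0 * e 1) = 0 := by
  rw [psi_val]; simp +decide [Matrix.det_fin_two, Pi.single_apply]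

lemma psiv11 : ψ ![2, 3] (e 2 * e 3) = 1 := by
  rw [psi_val]; simp +decide [Matrix.det_fin_two, Pi.single_apply]

lemma psiv12 : ψ ![2, 3] (e 4 * e 5) = 0 := by
  rw [psi_val]; simp +decide [Matrix.det_fin_two, Pi.single_apply]

lemma psiv13 : ψ ![2, 3] (e 2 * e 5) = 0 := by
  rw [psi_val]; simp +decide [Matrix.det_fin_two, Pi.single_apply]

lemma psiv14 : ψ ![2, 3] (e 3 * e 4) = 0 := by
  rw [psi_val]; simp +decide [Matrix.det_fin_two, Pi.single_apply]

lemma psiv20 : ψ ![4, 5] (e 0 * e 1) = 0 := by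
  rw [psi_val]; simp +decide [Matrix.det_fin_two, Pi.single_apply]

lemma psiv21 : ψ ![4, 5] (e 2 * e 3) = 0 := by
  rw [psi_val]; simp +decide [Matrix.det_fin_two, Pi.single_apply]

lemma psiv22 : ψ ![4, 5] (e 4 * e 5) = 1 := by
  rw [psi_val]; simp +decide [Matrix.det_fin_two, Pi.single_apply]

lemma psiv23 : ψ ![4, 5] (e 2 * e 5) = 0 := by
  rw [psi_val]; simp +decide [Matrix.det_fin_two, Pi.single_apply]

lemma psiv24 : ψ ![4, 5] (e 3 * e 4) = 0 := by
  rw [psi_val]; simp +decide [Matrix.det_fin_two, Pi.single_apply]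

lemma psiv30 : ψ ![2, 5] (e 0 * e 1) = 0 := by
  rw [psi_val]; simp +decide [Matrix.det_fin_two, Pi.single_apply]

lemma psiv31 : ψ ![2, 5] (e 2 * e 3) = 0 := by
  rw [psi_val]; simp +decide [Matrix.det_fin_two, Pi.single_apply]

lemma psiv32 : ψ ![2, 5] (e 4 * e 5) = 0 := by
  rw [psi_val]; simp +decide [Matrix.det_fin_two, Pi.single_apply]

lemma psiv33 : ψ ![2, 5] (e 2 * e 5) = 1 := by
  rw [psi_val]; simp +decide [Matrix.det_fin_two, Pi.single_apply]

lemma psiv34 : ψ ![2, 5] (e 3 * e 4) = 0 := by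
  rw [psi_val]; simp +decide [Matrix.det_fin_two, Pi.single_apply]

lemma psiv40 : ψ ![3, 4] (e 0 * e 1) = 0 := by
  rw [psi_val]; simp +decide [Matrix.det_fin_two, Pi.single_apply]

lemma psiv41 : ψ ![3, 4] (e 2 * e 3) = 0 := by
  rw [psi_val]; simp +decide [Matrix.det_fin_two, Pi.single_apply]

lemma psiv42 : ψ ![3, 4] (e 4 * e 5) = 0 := by
  rw [psi_val]; simp +decide [Matrix.det_fin_two, Pi.single_apply]

lemma psiv43 : ψ ![3, 4] (e 2 * e 5) = 0 := by
  rw [psi_val]; simp +decide [Matrix.det_fin_two, Pi.single_apply]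

lemma psiv44 : ψ ![3, 4] (e 3 * e 4) = 1 := by
  rw [psi_val]; simp +decide [Matrix.det_fin_two, Pi.single_apply]

lemma phiv00 : φ ![0, 1, 2, 3] (e 0 * (e 1 * (e 2 * e 3))) = 1 := by
  rw [phi_val]
  simp +decide [Matrix.det_succ_row_zero, Fin.sum_univ_succ, Pi.single_apply, Fin.succAbove, Fin.castSucc]

lemma phiv01 : φ ![0, 1, 2, 3] (e 0 * (e 1 * (e 4 * e 5))) = 0 := by
  rw [phi_val]
  simp +decide [Matrix.det_succ_row_zero, Fin.sum_univ_succ, Pi.single_apply, Fin.succAbove, Fin.castSucc]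

lemma phiv02 : φ ![0, 1, 2, 3] (e 0 * (e 1 * (e 2 * e 5))) = 0 := by
  rw [phi_val]
  simp +decide [Matrix.det_succ_row_zero, Fin.sum_univ_succ, Pi.single_apply, Fin.succAbove, Fin.castSucc]

lemma phiv03 : φ ![0, 1, 2, 3] (e 0 * (e 1 * (e 3 * e 4))) = 0 := by
  rw [phi_val]
  simp +decide [Matrix.det_succ_row_zero, Fin.sum_univ_succ, Pi.single_apply, Fin.succAbove, Fin.castSucc]

lemma phiv04 : φ ![0, 1, 2, 3] (e 2 * (e 3 * (e 4 * e 5))) = 0 := by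
  rw [phi_val]
  simp +decide [Matrix.det_succ_row_zero, Fin.sum_univ_succ, Pi.single_apply, Fin.succAbove, Fin.castSucc]

lemma phiv10 : φ ![0, 1, 4, 5] (e 0 * (e 1 * (e 2 * e 3))) = 0 := by
  rw [phi_val]
  simp +decide [Matrix.det_succ_row_zero, Fin.sum_univ_succ, Pi.single_apply, Fin.succAbove, Fin.castSucc]

lemma phiv11 : φ ![0, 1, 4, 5] (e 0 * (e 1 * (e 4 * e 5))) = 1 := by
  rw [phi_val]
  simp +decide [Matrix.det_succ_row_zero, Fin.sum_univ_succ, Pi.single_apply, Fin.succAbove, Fin.castSucc]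

lemma phiv12 : φ ![0, 1, 4, 5] (e 0 * (e 1 * (e 2 * e 5))) = 0 := by
  rw [phi_val]
  simp +decide [Matrix.det_succ_row_zero, Fin.sum_univ_succ, Pi.single_apply, Fin.succAbove, Fin.castSucc]

lemma phiv13 : φ ![0, 1, 4, 5] (e 0 * (e 1 * (e 3 * e 4))) = 0 := by
  rw [phi_val]
  simp +decide [Matrix.det_succ_row_zero, Fin.sum_univ_succ, Pi.single_apply, Fin.succAbove, Fin.castSucc]

lemma phiv14 : φ ![0, 1, 4, 5] (e 2 * (e 3 * (e 4 * e 5))) = 0 := by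
  rw [phi_val]
  simp +decide [Matrix.det_succ_row_zero, Fin.sum_univ_succ, Pi.single_apply, Fin.succAbove, Fin.castSucc]

lemma phiv20 : φ ![0, 1, 2, 5] (e 0 * (e 1 * (e 2 * e 3))) = 0 := by
  rw [phi_val]
  simp +decide [Matrix.det_succ_row_zero, Fin.sum_univ_succ, Pi.single_apply, Fin.succAbove, Fin.castSucc]

lemma phiv21 : φ ![0, 1, 2, 5] (e 0 * (e 1 * (e 4 * e 5))) = 0 := by
  rw [phi_val]
  simp +decide [Matrix.det_succ_row_zero, Fin.sum_univ_succ, Pi.single_apply, Fin.succAbove, Fin.castSucc]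

lemma phiv22 : φ ![0, 1, 2, 5] (e 0 * (e 1 * (e 2 * e 5))) = 1 := by
  rw [phi_val]
  simp +decide [Matrix.det_succ_row_zero, Fin.sum_univ_succ, Pi.single_apply, Fin.succAbove, Fin.castSucc]

lemma phiv23 : φ ![0, 1, 2, 5] (e 0 * (e 1 * (e 3 * e 4))) = 0 := by
  rw [phi_val]
  simp +decide [Matrix.det_succ_row_zero, Fin.sum_univ_succ, Pi.single_apply, Fin.succAbove, Fin.castSucc]

lemma phiv24 : φ ![0, 1, 2, 5] (e 2 * (e 3 * (e 4 * e 5))) = 0 := by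
  rw [phi_val]
  simp +decide [Matrix.det_succ_row_zero, Fin.sum_univ_succ, Pi.single_apply, Fin.succAbove, Fin.castSucc]

lemma phiv30 : φ ![0, 1, 3, 4] (e 0 * (e 1 * (e 2 * e 3))) = 0 := by
  rw [phi_val]
  simp +decide [Matrix.det_succ_row_zero, Fin.sum_univ_succ, Pi.single_apply, Fin.succAbove, Fin.castSucc]

lemma phiv31 : φ ![0, 1, 3, 4] (e 0 * (e 1 * (e 4 * e 5))) = 0 := by
  rw [phi_val]
  simp +decide [Matrix.det_succ_row_zero, Fin.sum_univ_succ, Pi.single_apply, Fin.succAbove, Fin.castSucc]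

lemma phiv32 : φ ![0, 1, 3, 4] (e 0 * (e 1 * (e 2 * e 5))) = 0 := by
  rw [phi_val]
  simp +decide [Matrix.det_succ_row_zero, Fin.sum_univ_succ, Pi.single_apply, Fin.succAbove, Fin.castSucc]

lemma phiv33 : φ ![0, 1, 3, 4] (e 0 * (e 1 * (e 3 * e 4))) = 1 := by
  rw [phi_val]
  simp +decide [Matrix.det_succ_row_zero, Fin.sum_univ_succ, Pi.single_apply, Fin.succAbove, Fin.castSucc]

lemma phiv34 : φ ![0, 1, 3, 4] (e 2 * (e 3 * (e 4 * e 5))) = 0 := by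
  rw [phi_val]
  simp +decide [Matrix.det_succ_row_zero, Fin.sum_univ_succ, Pi.single_apply, Fin.succAbove, Fin.castSucc]

lemma phiv40 : φ ![2, 3, 4, 5] (e 0 * (e 1 * (e 2 * e 3))) = 0 := by
  rw [phi_val]
  simp +decide [Matrix.det_succ_row_zero, Fin.sum_univ_succ, Pi.single_apply, Fin.succAbove, Fin.castSucc]

lemma phiv41 : φ ![2, 3, 4, 5] (e 0 * (e 1 * (e 4 * e 5))) = 0 := by
  rw [phi_val]
  simp +decide [Matrix.det_succ_row_zero, Fin.sum_univ_succ, Pi.single_apply, Fin.succAbove, Fin.castSucc]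

lemma phiv42 : φ ![2, 3, 4, 5] (e 0 * (e 1 * (e 2 * e 5))) = 0 := by
  rw [phi_val]
  simp +decide [Matrix.det_succ_row_zero, Fin.sum_univ_succ, Pi.single_apply, Fin.succAbove, Fin.castSucc]

lemma phiv43 : φ ![2, 3, 4, 5] (e 0 * (e 1 * (e 3 * e 4))) = 0 := by
  rw [phi_val]
  simp +decide [Matrix.det_succ_row_zero, Fin.sum_univ_succ, Pi.single_apply, Fin.succAbove, Fin.castSucc]

lemma phiv44 : φ ![2, 3, 4, 5] (e 2 * (e 3 * (e 4 * e 5))) = 1 := by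
  rw [phi_val]
  simp +decide [Matrix.det_succ_row_zero, Fin.sum_univ_succ, Pi.single_apply, Fin.succAbove, Fin.castSucc]

end Stmt6Aux

open Stmt6Aux

set_option maxHeartbeats 4000000 in
/-- for Ω = c₁ e¹∧e² + c₂ e³∧e⁴ + c₃ e⁵∧e⁶ + c₄ e³∧e⁶ + c₅ e⁴∧e⁵,
the linear map x ↦ Ω∧x from span{e¹∧e², e³∧e⁴, e⁵∧e⁶, e³∧e⁶, e⁴∧e⁵} to the
4-forms is injective iff c₁(c₂c₃ + c₄c₅) ≠ 0. -/
theorem stmt6 (c₁ c₂ c₃ c₄ c₅ : ℝ) :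
    Function.Injective
      (fun x : Submodule.span ℝ
          ({e 0 * e 1, e 2 * e 3, e 4 * e 5, e 2 * e 5, e 3 * e 4} :
            Set (ExteriorAlgebra ℝ (Fin 6 → ℝ))) =>
        (c₁ • (e 0 * e 1) + c₂ • (e 2 * e 3) + c₃ • (e 4 * e 5)
          + c₄ • (e 2 * e 5) + c₅ • (e 3 * e 4)) * (x : ExteriorAlgebra ℝ (Fin 6 → ℝ)))
      ↔ c₁ * (c₂ * c₃ + c₄ * c₅) ≠ 0 := by
  constructor
  · intro hinj hC
    have key : ∀ t₁ t₂ t₃ t₄ t₅ : ℝ,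
        (c₁ • (e 0 * e 1) + c₂ • (e 2 * e 3) + c₃ • (e 4 * e 5)
          + c₄ • (e 2 * e 5) + c₅ • (e 3 * e 4)) *
          (t₁ • (e 0 * e 1) + t₂ • (e 2 * e 3) + t₃ • (e 4 * e 5)
            + t₄ • (e 2 * e 5) + t₅ • (e 3 * e 4)) = 0 →
        t₁ • (e 0 * e 1) + t₂ • (e 2 * e 3) + t₃ • (e 4 * e 5)
          + t₄ • (e 2 * e 5) + t₅ • (e 3 * e 4) = 0 := by
      intro t₁ t₂ t₃ t₄ t₅ h0
      have h' : (⟨t₁ • (e 0 * e 1) + t₂ • (e 2 * e 3) + t₃ • (e 4 * e 5)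
            + t₄ • (e 2 * e 5) + t₅ • (e 3 * e 4), mem_comb t₁ t₂ t₃ t₄ t₅⟩ :
          Submodule.span ℝ
            ({e 0 * e 1, e 2 * e 3, e 4 * e 5, e 2 * e 5, e 3 * e 4} :
              Set (ExteriorAlgebra ℝ (Fin 6 → ℝ)))) = 0 := by
        apply hinj
        show (c₁ • (e 0 * e 1) + c₂ • (e 2 * e 3) + c₃ • (e 4 * e 5)
            + c₄ • (e 2 * e 5) + c₅ • (e 3 * e 4)) *
            (t₁ • (e 0 * e 1) + t₂ • (e 2 * e 3) + t₃ • (e 4 * e 5)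
              + t₄ • (e 2 * e 5) + t₅ • (e 3 * e 4))
          = (c₁ • (e 0 * e 1) + c₂ • (e 2 * e 3) + c₃ • (e 4 * e 5)
            + c₄ • (e 2 * e 5) + c₅ • (e 3 * e 4)) *
            ((0 : Submodule.span ℝ
              ({e 0 * e 1, e 2 * e 3, e 4 * e 5, e 2 * e 5, e 3 * e 4} :
                Set (ExteriorAlgebra ℝ (Fin 6 → ℝ)))) : ExteriorAlgebra ℝ (Fin 6 → ℝ))
        rw [ZeroMemClass.coe_zero, mul_zero, h0]
      exact congrArg Subtype.val h'
    by_cases h1 : c₁ = 0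
    · by_cases h2 : c₂ = 0 ∧ c₃ = 0 ∧ c₄ = 0 ∧ c₅ = 0
      · obtain ⟨h2, h3, h4, h5⟩ := h2
        have h0 := key 0 1 0 0 0
          (by rw [expand]; subst h1 h2 h3 h4 h5; match_scalars <;> ring)
        have := congrArg (ψ ![2, 3]) h0
        simp only [map_add, map_smul, map_zero, psiv10, psiv11, psiv12, psiv13, psiv14,
          smul_eq_mul, mul_one, mul_zero, add_zero, zero_add] at this
        exact one_ne_zero this
      · have h0 := key 0 c₂ (-c₃) c₄ (-c₅)
          (by rw [expand]; subst h1; match_scalars <;> ring)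
        apply h2
        refine ⟨?_, ?_, ?_, ?_⟩
        · have := congrArg (ψ ![2, 3]) h0
          simp only [map_add, map_smul, map_zero, psiv10, psiv11, psiv12, psiv13, psiv14,
            smul_eq_mul, mul_one, mul_zero, add_zero, zero_add] at this
          linarith
        · have := congrArg (ψ ![4, 5]) h0
          simp only [map_add, map_smul, map_zero, psiv20, psiv21, psiv22, psiv23, psiv24,
            smul_eq_mul, mul_one, mul_zero, add_zero, zero_add] at this
          linarith
        · have := congrArg (ψ ![2, 5]) h0
          simp only [map_add, map_smul, map_zero, psiv30, psiv31, psiv32, psiv33, psiv34,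
            smul_eq_mul, mul_one, mul_zero, add_zero, zero_add] at this
          linarith
        · have := congrArg (ψ ![3, 4]) h0
          simp only [map_add, map_smul, map_zero, psiv40, psiv41, psiv42, psiv43, psiv44,
            smul_eq_mul, mul_one, mul_zero, add_zero, zero_add] at this
          linarith
    · have hsum : c₂ * c₃ + c₄ * c₅ = 0 := (mul_eq_zero.mp hC).resolve_left h1
      have h0 := key c₁ (-c₂) (-c₃) (-c₄) (-c₅)
        (by rw [expand]; match_scalars <;>
              first
              | ring1
              | linear_combination (-2 : ℝ) * hsum)
      have := congrArg (ψ ![0, 1]) h0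
      simp only [map_add, map_smul, map_zero, psiv00, psiv01, psiv02, psiv03, psiv04,
        smul_eq_mul, mul_one, mul_zero, add_zero, zero_add] at this
      exact h1 this
  · intro hC x y hxy
    have hc1 : c₁ ≠ 0 := left_ne_zero_of_mul hC
    have hs : c₂ * c₃ + c₄ * c₅ ≠ 0 := right_ne_zero_of_mul hC
    have h0 : (c₁ • (e 0 * e 1) + c₂ • (e 2 * e 3) + c₃ • (e 4 * e 5)
        + c₄ • (e 2 * e 5) + c₅ • (e 3 * e 4)) *
        ((x : ExteriorAlgebra ℝ (Fin 6 → ℝ)) - y) = 0 := by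
      have hxy' : (c₁ • (e 0 * e 1) + c₂ • (e 2 * e 3) + c₃ • (e 4 * e 5)
          + c₄ • (e 2 * e 5) + c₅ • (e 3 * e 4)) * (x : ExteriorAlgebra ℝ (Fin 6 → ℝ))
          = (c₁ • (e 0 * e 1) + c₂ • (e 2 * e 3) + c₃ • (e 4 * e 5)
          + c₄ • (e 2 * e 5) + c₅ • (e 3 * e 4)) * (y : ExteriorAlgebra ℝ (Fin 6 → ℝ)) := hxy
      rw [mul_sub, hxy', sub_self]
    obtain ⟨t₁, t₂, t₃, t₄, t₅, hrep⟩ := rep (sub_mem x.2 y.2)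
    rw [hrep, expand] at h0
    have eq1 : c₁ * t₂ + c₂ * t₁ = 0 := by
      have := congrArg (φ ![0, 1, 2, 3]) h0
      simp only [map_add, map_smul, map_zero, phiv00, phiv01, phiv02, phiv03, phiv04,
        smul_eq_mul, mul_one, mul_zero, add_zero, zero_add] at this
      linarith
    have eq2 : c₁ * t₃ + c₃ * t₁ = 0 := by
      have := congrArg (φ ![0, 1, 4, 5]) h0
      simp only [map_add, map_smul, map_zero, phiv10, phiv11, phiv12, phiv13, phiv14,
        smul_eq_mul, mul_one, mul_zero, add_zero, zero_add] at this
      linarith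
    have eq3 : c₁ * t₄ + c₄ * t₁ = 0 := by
      have := congrArg (φ ![0, 1, 2, 5]) h0
      simp only [map_add, map_smul, map_zero, phiv20, phiv21, phiv22, phiv23, phiv24,
        smul_eq_mul, mul_one, mul_zero, add_zero, zero_add] at this
      linarith
    have eq4 : c₁ * t₅ + c₅ * t₁ = 0 := by
      have := congrArg (φ ![0, 1, 3, 4]) h0
      simp only [map_add, map_smul, map_zero, phiv30, phiv31, phiv32, phiv33, phiv34,
        smul_eq_mul, mul_one, mul_zero, add_zero, zero_add] at this
      linarith
    have eq5 : c₂ * t₃ + c₃ * t₂ + c₄ * t₅ + c₅ * t₄ = 0 := by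
      have := congrArg (φ ![2, 3, 4, 5]) h0
      simp only [map_add, map_smul, map_zero, phiv40, phiv41, phiv42, phiv43, phiv44,
        smul_eq_mul, mul_one, mul_zero, add_zero, zero_add] at this
      linarith
    have ht1 : t₁ = 0 := by
      have h2s : (2 * (c₂ * c₃ + c₄ * c₅)) * t₁ = 0 := by
        linear_combination c₂ * eq2 + c₃ * eq1 + c₄ * eq4 + c₅ * eq3 - c₁ * eq5
      exact (mul_eq_zero.mp h2s).resolve_left (mul_ne_zero two_ne_zero hs)
    have ht2 : t₂ = 0 := by
      have : c₁ * t₂ = 0 := by linear_combination eq1 - c₂ * ht1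
      exact (mul_eq_zero.mp this).resolve_left hc1
    have ht3 : t₃ = 0 := by
      have : c₁ * t₃ = 0 := by linear_combination eq2 - c₃ * ht1
      exact (mul_eq_zero.mp this).resolve_left hc1
    have ht4 : t₄ = 0 := by
      have : c₁ * t₄ = 0 := by linear_combination eq3 - c₄ * ht1
      exact (mul_eq_zero.mp this).resolve_left hc1
    have ht5 : t₅ = 0 := by
      have : c₁ * t₅ = 0 := by linear_combination eq4 - c₅ * ht1
      exact (mul_eq_zero.mp this).resolve_left hc1
    have hz : (x : ExteriorAlgebra ℝ (Fin 6 → ℝ)) - y = 0 := by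
      rw [hrep, ht1, ht2, ht3, ht4, ht5]; simp
    exact Subtype.ext (sub_eq_zero.mp hz)
end

section
/- With Ω as above (Ω = cω + c₁ξ₁ + c₂ξ₂ + c₃ξ₃ + aθ), Ω is a symplectic form (Ω³ ≠ 0) if and only if both c - c₂ - c₃ ≠ 0 and c² - c₁² + a² + cc₂ + cc₃ + c₂c₃ ≠ 0. -/
open ExteriorAlgebra

noncomputable def α₁ := e 0
noncomputable def β₁ := e 1
noncomputable def α₂ := e 2
noncomputable def β₂ := e 3
noncomputable def γ' := e 4
noncomputable def η' := e 5

/-- ω = α₁∧β₁ + α₂∧β₂ + γ∧η -/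
noncomputable def ω : ExteriorAlgebra ℝ (Fin 6 → ℝ) := α₁ * β₁ + α₂ * β₂ + γ' * η'
/-- ξ₁ = α₁∧β₂ + α₂∧β₁ -/
noncomputable def ξ₁ : ExteriorAlgebra ℝ (Fin 6 → ℝ) := α₁ * β₂ + α₂ * β₁
/-- ξ₂ = α₁∧β₁ - γ∧η -/
noncomputable def ξ₂ : ExteriorAlgebra ℝ (Fin 6 → ℝ) := α₁ * β₁ - γ' * η'
/-- ξ₃ = α₂∧β₂ - γ∧η -/
noncomputable def ξ₃ : ExteriorAlgebra ℝ (Fin 6 → ℝ) := α₂ * β₂ - γ' * η'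
/-- θ = α₁∧β₂ - α₂∧β₁ -/
noncomputable def θ : ExteriorAlgebra ℝ (Fin 6 → ℝ) := α₁ * β₂ - α₂ * β₁

/-- Ω = cω + c₁ξ₁ + c₂ξ₂ + c₃ξ₃ + aθ -/
noncomputable def Ω (c c₁ c₂ c₃ a : ℝ) : ExteriorAlgebra ℝ (Fin 6 → ℝ) :=
  c • ω + c₁ • ξ₁ + c₂ • ξ₂ + c₃ • ξ₃ + a • θ

/- ### Auxiliary lemmas -/

lemma e_sq (i : Fin 6) : e i * e i = 0 := ι_sq_zero _
lemma e_sq' (i : Fin 6) (x : ExteriorAlgebra ℝ (Fin 6 → ℝ)) : e i * (e i * x) = 0 := by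
  rw [← mul_assoc, e_sq, zero_mul]
lemma e_swap (i j : Fin 6) (_h : j < i) : e i * e j = -(e j * e i) := by
  rw [eq_neg_iff_add_eq_zero, add_comm]; exact ι_add_mul_swap _ _
lemma e_swap' (i j : Fin 6) (_h : j < i) (x : ExteriorAlgebra ℝ (Fin 6 → ℝ)) :
    e i * (e j * x) = -(e j * (e i * x)) := by
  rw [← mul_assoc, ← mul_assoc, e_swap i j _h, neg_mul]

lemma f3' : (Fin.succ 2 : Fin 6) = 3 := rfl
lemma f4' : ((Fin.succ 2).succ : Fin 6) = 4 := rfl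
lemma f5' : ((Fin.succ 2).succ.succ : Fin 6) = 5 := rfl

lemma E6_eq : e 0 * (e 1 * (e 2 * (e 3 * (e 4 * e 5)))) = ιMulti ℝ 6 (fun i => Pi.single i 1) := by
  rw [ιMulti_apply]
  simp [List.ofFn_succ, e, mul_assoc, f3', f4', f5']

noncomputable def detMap : ∀ i : ℕ, (Fin 6 → ℝ) [⋀^Fin i]→ₗ[ℝ] ℝ
  | 6 => Matrix.detRowAlternating
  | _ => 0

lemma detMap6 : detMap 6 = Matrix.detRowAlternating := rfl

lemma det_one' : Matrix.detRowAlternating (1 : Matrix (Fin 6) (Fin 6) ℝ) = 1 := by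
  rw [show Matrix.detRowAlternating (1 : Matrix (Fin 6) (Fin 6) ℝ) = Matrix.det 1 from rfl,
    Matrix.det_one]

lemma E6_ne_zero : e 0 * (e 1 * (e 2 * (e 3 * (e 4 * e 5)))) ≠ 0 := by
  intro h
  have h2 := congrArg (liftAlternating (R := ℝ) detMap) h
  rw [E6_eq, map_zero, liftAlternating_apply_ιMulti, detMap6] at h2
  have hone : (fun i : Fin 6 => Pi.single i (1:ℝ)) = (1 : Matrix (Fin 6) (Fin 6) ℝ) := by
    funext i j
    simp [Matrix.one_apply, Pi.single_apply, eq_comm]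
  rw [hone, det_one'] at h2
  exact one_ne_zero h2

lemma omega_eq (c c₁ c₂ c₃ a : ℝ) : Ω c c₁ c₂ c₃ a =
    (c + c₂) • (e 0 * e 1) + (c + c₃) • (e 2 * e 3) + (c - c₂ - c₃) • (e 4 * e 5)
      + (c₁ + a) • (e 0 * e 3) + (c₁ - a) • (e 2 * e 1) := by
  simp only [Ω, ω, ξ₁, ξ₂, ξ₃, θ, α₁, β₁, α₂, β₂, γ', η']
  module

set_option maxHeartbeats 1000000 in
lemma cube_eq (c c₁ c₂ c₃ a : ℝ) :
    Ω c c₁ c₂ c₃ a * Ω c c₁ c₂ c₃ a * Ω c c₁ c₂ c₃ a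
      = (6 * (c - c₂ - c₃) * (c ^ 2 - c₁ ^ 2 + a ^ 2 + c * c₂ + c * c₃ + c₂ * c₃)) •
        (e 0 * (e 1 * (e 2 * (e 3 * (e 4 * e 5))))) := by
  rw [omega_eq]
  simp (config := { decide := true }) only [mul_add, add_mul, smul_mul_assoc, mul_smul_comm,
    mul_assoc, e_sq, e_sq', e_swap, e_swap', smul_zero, mul_zero, zero_mul, smul_neg, neg_neg,
    add_zero, zero_add, neg_zero, neg_mul, mul_neg, smul_smul]
  module

/-- Ω is symplectic (Ω³ ≠ 0) iff c - c₂ - c₃ ≠ 0 and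
c² - c₁² + a² + cc₂ + cc₃ + c₂c₃ ≠ 0. -/
theorem stmt10 (c c₁ c₂ c₃ a : ℝ) :
    Ω c c₁ c₂ c₃ a * Ω c c₁ c₂ c₃ a * Ω c c₁ c₂ c₃ a ≠ 0
      ↔ (c - c₂ - c₃ ≠ 0 ∧ c ^ 2 - c₁ ^ 2 + a ^ 2 + c * c₂ + c * c₃ + c₂ * c₃ ≠ 0) := by
  rw [cube_eq, smul_ne_zero_iff]
  constructor
  · rintro ⟨hK, -⟩
    refine ⟨fun h => hK ?_, fun h => hK ?_⟩ <;> rw [h] <;> ring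
  · rintro ⟨h1, h2⟩
    exact ⟨mul_ne_zero (mul_ne_zero (by norm_num) h1) h2, E6_ne_zero⟩
end
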